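/- (Recovery of the Bakry–Emery Ricci tensor from coarse Ricci curvature, weighted Euclidean case.) Let ρ : ℝⁿ → ℝ be smooth (C³), let x ∈ ℝⁿ, and let γ : ℝ → ℝⁿ be a C² curve with γ(0) = x. Then the coarse Ricci curvature Ric_{Δ_ρ}(x,y) = Γ₂(Δ_ρ, f_{x,y}, f_{x,y})(x) satisfies (1/2)·(d²/ds²)|_{s=0} Ric_{Δ_ρ}(x, γ(s)) = Hess ρ_x(γ'(0), γ'(0)), which is the Bakry–Emery Ricci tensor Ric_∞ = Ric + Hess ρ of the metric measure space (ℝⁿ, flat metric, e^{−ρ}dx) evaluated at (γ'(0), γ'(0)). -/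

import Mathlib

open scoped RealInnerProductSpace

/-- The Euclidean Laplacian: the trace of the Hessian, i.e. the sum of pure second
partial derivatives. -/
noncomputable def eLap {n : ℕ} (f : EuclideanSpace ℝ (Fin n) → ℝ)
    (x : EuclideanSpace ℝ (Fin n)) : ℝ :=
  ∑ i, fderiv ℝ (fun y => fderiv ℝ f y (EuclideanSpace.single i 1)) x (EuclideanSpace.single i 1)

/-- The carré du champ of an operator `L`: `Γ(L,u,v) = (1/2)(L(uv) − (Lu)v − u(Lv))`. -/
noncomputable def carre {n : ℕ}
    (L : (EuclideanSpace ℝ (Fin n) → ℝ) → EuclideanSpace ℝ (Fin n) → ℝ)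
    (u v : EuclideanSpace ℝ (Fin n) → ℝ) (z : EuclideanSpace ℝ (Fin n)) : ℝ :=
  (1/2) * (L (fun w => u w * v w) z - L u z * v z - u z * L v z)

/-- The iterated carré du champ (diagonal):
`Γ₂(L,f,f) = (1/2)(L(Γ(L,f,f)) − 2Γ(L,Lf,f))`. -/
noncomputable def gamma2 {n : ℕ}
    (L : (EuclideanSpace ℝ (Fin n) → ℝ) → EuclideanSpace ℝ (Fin n) → ℝ)
    (f : EuclideanSpace ℝ (Fin n) → ℝ) (z : EuclideanSpace ℝ (Fin n)) : ℝ :=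
  (1/2) * (L (carre L f f) z - 2 * carre L (L f) f z)

/-- The weighted Laplacian `Δ_ρ f = Δf − ⟨∇ρ, ∇f⟩`. -/
noncomputable def wLap {n : ℕ} (ρ f : EuclideanSpace ℝ (Fin n) → ℝ)
    (z : EuclideanSpace ℝ (Fin n)) : ℝ :=
  eLap f z - ⟪gradient ρ z, gradient f z⟫

/-- The Hessian matrix of second partial derivatives. -/
noncomputable def hess {n : ℕ} (f : EuclideanSpace ℝ (Fin n) → ℝ)
    (z : EuclideanSpace ℝ (Fin n)) (i j : Fin n) : ℝ :=
  fderiv ℝ (fun y => fderiv ℝ f y (EuclideanSpace.single j 1)) z (EuclideanSpace.single i 1)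

/-- The test function `f_{x,y}(z) = (1/2)(d²(x,y) − d²(y,z) + d²(z,x))`. -/
noncomputable def testFn {n : ℕ} (x y z : EuclideanSpace ℝ (Fin n)) : ℝ :=
  (1/2) * (dist x y ^ 2 - dist y z ^ 2 + dist z x ^ 2)

/-- The coarse Ricci curvature of an operator `L`:
`Ric_L(x,y) = Γ₂(L, f_{x,y}, f_{x,y})(x)`. -/
noncomputable def cRic {n : ℕ}
    (L : (EuclideanSpace ℝ (Fin n) → ℝ) → EuclideanSpace ℝ (Fin n) → ℝ)
    (x y : EuclideanSpace ℝ (Fin n)) : ℝ :=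
  gamma2 L (testFn x y) x


section Helpers
variable {n : ℕ}
local notation "E" => EuclideanSpace ℝ (Fin n)

theorem single_sum (v : E) : ∑ i, v i • EuclideanSpace.single i 1 = v := by
  have := (EuclideanSpace.basisFun (Fin n) ℝ).toBasis.sum_repr v
  simpa [EuclideanSpace.basisFun_apply] using this

theorem clm_expand (L : E →L[ℝ] ℝ) (v : E) :
    L v = ∑ i, v i * L (EuclideanSpace.single i 1) := by
  conv_lhs => rw [← single_sum v]
  rw [map_sum]; simp

theorem inner_grad (h : E → ℝ) (z w : E) : ⟪gradient h z, w⟫ = fderiv ℝ h z w := by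
  simp [gradient, InnerProductSpace.toDual_symm_apply]

theorem wLap_eq (ρ h : E → ℝ) (z : E) :
    wLap ρ h z = eLap h z - fderiv ℝ h z (gradient ρ z) := by
  rw [wLap, real_inner_comm, inner_grad]

theorem aff_hasFDeriv (v : E) (c : ℝ) (z : E) :
    HasFDerivAt (fun w : E => ⟪v, w⟫ + c) (innerSL ℝ v) z := by
  have h := ((innerSL ℝ v).hasFDerivAt (x := z)).add_const c
  simpa [innerSL_apply_apply] using h

theorem aff_fderiv (v : E) (c : ℝ) (z : E) :
    fderiv ℝ (fun w : E => ⟪v, w⟫ + c) z = innerSL ℝ v :=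
  (aff_hasFDeriv v c z).fderiv

theorem aff_contDiff (v : E) (c : ℝ) : ContDiff ℝ 2 (fun w : E => ⟪v, w⟫ + c) :=
  (ContDiff.inner ℝ contDiff_const contDiff_id).add contDiff_const

theorem eLap_aff (v : E) (c : ℝ) (z : E) : eLap (fun w : E => ⟪v, w⟫ + c) z = 0 := by
  unfold eLap
  have h : ∀ i : Fin n,
      (fun y => fderiv ℝ (fun w : E => ⟪v, w⟫ + c) y (EuclideanSpace.single i 1))
      = fun _ => ⟪v, (EuclideanSpace.single i 1 : E)⟫ := by
    intro i; funext y; rw [aff_fderiv]; simp [innerSL_apply_apply]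
  simp only [h]
  simp

theorem fderiv_mul_aff {u : E → ℝ} (hu : Differentiable ℝ u) (v : E) (c : ℝ) (y : E) :
    fderiv ℝ (fun w => u w * (⟪v, w⟫ + c)) y
      = u y • innerSL ℝ v + (⟪v, y⟫ + c) • fderiv ℝ u y := by
  rw [fderiv_fun_mul (hu y) (((aff_contDiff v c).differentiable (by norm_num)) y), aff_fderiv]

theorem fd_diff {u : E → ℝ} (hu : ContDiff ℝ 2 u) (w : E) :
    Differentiable ℝ (fun y : E => fderiv ℝ u y w) :=
  ((hu.fderiv_right (m := 1) (by norm_num)).clm_apply contDiff_const).differentiable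
    (by norm_num)
theorem eLap_mul_aff {u : E → ℝ} (hu : ContDiff ℝ 2 u) (v : E) (c : ℝ) (z : E) :
    eLap (fun w => u w * (⟪v, w⟫ + c)) z
      = (⟪v, z⟫ + c) * eLap u z + 2 * fderiv ℝ u z v := by
  have hu1 : Differentiable ℝ u := hu.differentiable (by norm_num)
  unfold eLap
  have key : ∀ i : Fin n,
      fderiv ℝ (fun y => fderiv ℝ (fun w => u w * (⟪v, w⟫ + c)) y (EuclideanSpace.single i 1)) z
          (EuclideanSpace.single i 1)
      = 2 * (v i * fderiv ℝ u z (EuclideanSpace.single i 1))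
        + (⟪v, z⟫ + c) * fderiv ℝ (fun y => fderiv ℝ u y (EuclideanSpace.single i 1)) z
            (EuclideanSpace.single i 1) := by
    intro i
    have h1 : (fun y => fderiv ℝ (fun w => u w * (⟪v, w⟫ + c)) y (EuclideanSpace.single i 1))
        = fun y => u y * v i + (⟪v, y⟫ + c) * fderiv ℝ u y (EuclideanSpace.single i 1) := by
      funext y
      rw [fderiv_mul_aff hu1 v c y]
      simp [innerSL_apply_apply, EuclideanSpace.inner_single_right]
    rw [h1]
    have d1 : DifferentiableAt ℝ (fun y => u y * v i) z := (hu1 z).mul_const _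
    have d2 : DifferentiableAt ℝ
        (fun y => (⟪v, y⟫ + c) * fderiv ℝ u y (EuclideanSpace.single i 1)) z :=
      ((((aff_contDiff v c).differentiable (by norm_num)) z)).mul
        ((fd_diff hu (EuclideanSpace.single i 1)) z)
    rw [fderiv_fun_add d1 d2, fderiv_mul_const (hu1 z) (v i),
      fderiv_fun_mul ((((aff_contDiff v c).differentiable (by norm_num)) z))
        ((fd_diff hu (EuclideanSpace.single i 1)) z), aff_fderiv]
    simp [innerSL_apply_apply, EuclideanSpace.inner_single_right]
    ring
  simp only [key]
  rw [Finset.sum_add_distrib, ← Finset.mul_sum, ← Finset.mul_sum, ← clm_expand]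
  ring

theorem carre_aff (ρ : E → ℝ) {u : E → ℝ} (hu : ContDiff ℝ 2 u) (v : E) (c : ℝ) (z : E) :
    carre (wLap ρ) u (fun w => ⟪v, w⟫ + c) z = fderiv ℝ u z v := by
  have hu1 : Differentiable ℝ u := hu.differentiable (by norm_num)
  rw [carre, wLap_eq, wLap_eq, wLap_eq, eLap_mul_aff hu v c z, eLap_aff,
    fderiv_mul_aff hu1 v c z, aff_fderiv]
  simp only [ContinuousLinearMap.add_apply, ContinuousLinearMap.smul_apply, smul_eq_mul,
    innerSL_apply_apply]
  ring

theorem wLap_aff (ρ : E → ℝ) (v : E) (c : ℝ) :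
    wLap ρ (fun w : E => ⟪v, w⟫ + c) = fun z => -(fderiv ℝ ρ z v) := by
  funext z
  rw [wLap_eq, eLap_aff, aff_fderiv, ← inner_grad ρ z v]
  simp only [innerSL_apply_apply]
  rw [real_inner_comm]
  ring

theorem wLap_const (ρ : E → ℝ) (k : ℝ) (z : E) : wLap ρ (fun _ => k) z = 0 := by
  rw [wLap_eq]
  have h : eLap (fun _ : E => k) z = 0 := by
    unfold eLap
    have h2 : ∀ i : Fin n,
        (fun y : E => fderiv ℝ (fun _ : E => k) y (EuclideanSpace.single i 1))
        = fun _ => (0 : ℝ) := by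
      intro i; funext y; simp
    simp only [h2]; simp
  rw [h]; simp

theorem testFn_eq (x y : E) :
    testFn x y = fun z => ⟪y - x, z⟫ + (-⟪x, y - x⟫) := by
  funext z
  simp only [testFn, dist_eq_norm, ← real_inner_self_eq_norm_sq, inner_sub_sub_self,
    inner_sub_left, inner_sub_right]
  rw [real_inner_comm y x, real_inner_comm z x, real_inner_comm y z]
  ring
theorem cRic_eq {ρ : E → ℝ} (hρ : ContDiff ℝ 3 ρ) (x y : E) :
    cRic (wLap ρ) x y = ∑ i, ∑ j, hess ρ x i j * (y - x) i * (y - x) j := by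
  set v : E := y - x with hv
  have hfe := testFn_eq x y
  have hg2 : ContDiff ℝ 2 (fun z : E => fderiv ℝ ρ z v) :=
    (hρ.fderiv_right (m := 2) (by norm_num)).clm_apply contDiff_const
  have hΓ : carre (wLap ρ) (testFn x y) (testFn x y) = fun _ => ⟪v, v⟫ := by
    funext z
    rw [hfe, carre_aff ρ (aff_contDiff v _) v _ z, aff_fderiv]
    simp [innerSL_apply_apply]
  have hLf : wLap ρ (testFn x y) = fun z => -(fderiv ℝ ρ z v) := by
    rw [hfe, wLap_aff]
  have hΓ2 : carre (wLap ρ) (wLap ρ (testFn x y)) (testFn x y) x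
      = -(fderiv ℝ (fun z : E => fderiv ℝ ρ z v) x v) := by
    rw [hLf, hfe, carre_aff ρ hg2.neg v _ x, fderiv_fun_neg]
    simp
  have hB : fderiv ℝ (fun z : E => fderiv ℝ ρ z v) x v
      = ∑ i, ∑ j, hess ρ x i j * v i * v j := by
    have h1 : (fun z : E => fderiv ℝ ρ z v)
        = fun z => ∑ j, v j * fderiv ℝ ρ z (EuclideanSpace.single j 1) := by
      funext z; exact clm_expand _ v
    have hdj : ∀ j : Fin n,
        Differentiable ℝ (fun z : E => fderiv ℝ ρ z (EuclideanSpace.single j 1)) := fun j =>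
      ((hρ.fderiv_right (m := 2) (by norm_num)).clm_apply contDiff_const).differentiable
        (by norm_num)
    rw [h1, fderiv_fun_sum (fun j _ => ((hdj j) x).const_mul (v j))]
    simp only [ContinuousLinearMap.sum_apply]
    have h2 : ∀ j : Fin n,
        fderiv ℝ (fun z : E => v j * fderiv ℝ ρ z (EuclideanSpace.single j 1)) x v
        = v j * ∑ i, v i * hess ρ x i j := by
      intro j
      rw [fderiv_const_mul ((hdj j) x) (v j)]
      simp only [ContinuousLinearMap.smul_apply, smul_eq_mul]
      congr 1
      exact clm_expand _ v
    simp only [h2]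
    simp only [Finset.mul_sum]
    rw [Finset.sum_comm]
    refine Finset.sum_congr rfl fun i _ => Finset.sum_congr rfl fun j _ => by ring
  rw [cRic, gamma2, hΓ, hΓ2, wLap_const, hB]
  ring
end Helpers

/-- **recovery of the Bakry–Emery Ricci tensor.** For a C³ weight `ρ`,
a point `x`, and a C² curve `γ` with `γ(0) = x`, the coarse Ricci curvature of the
weighted Laplacian satisfies
`(1/2)·(d²/ds²)|₀ Ric_{Δ_ρ}(x, γ(s)) = Hess ρ_x(γ'(0), γ'(0))`,
the Bakry–Emery Ricci tensor `Ric_∞ = Ric + Hess ρ` of flat `ℝⁿ` with measure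
`e^{−ρ}dx` evaluated at `(γ'(0), γ'(0))`. -/
theorem bakry_emery_ricci_recovered_from_coarse_ricci
    {n : ℕ} (ρ : EuclideanSpace ℝ (Fin n) → ℝ) (hρ : ContDiff ℝ 3 ρ)
    (x : EuclideanSpace ℝ (Fin n)) (γ : ℝ → EuclideanSpace ℝ (Fin n))
    (hγ : ContDiff ℝ 2 γ) (h0 : γ 0 = x) :
    (1/2 : ℝ) * deriv (deriv (fun s => cRic (wLap ρ) x (γ s))) 0
      = ∑ i, ∑ j, hess ρ x i j * deriv γ 0 i * deriv γ 0 j := by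
  have hγ1 : Differentiable ℝ γ := hγ.differentiable (by norm_num)
  have hdγ : Differentiable ℝ (deriv γ) := by
    have h1 : ContDiff ℝ 1 (fderiv ℝ γ) := hγ.fderiv_right (m := 1) (by norm_num)
    have h2 : deriv γ = fun s => fderiv ℝ γ s 1 := funext fun s => fderiv_apply_one_eq_deriv.symm
    rw [h2]
    exact (h1.clm_apply contDiff_const).differentiable (by norm_num)
  have hc : ∀ (i : Fin n) (s : ℝ), HasDerivAt (fun t => γ t i - x i) (deriv γ s i) s := by
    intro i s
    have h := ((EuclideanSpace.proj i).hasFDerivAt).comp_hasDerivAt s (hγ1 s).hasDerivAt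
    simpa [Function.comp] using h.sub_const (x i)
  have hc' : ∀ i : Fin n, HasDerivAt (fun s => deriv γ s i) (deriv (deriv γ) 0 i) 0 := by
    intro i
    have h := ((EuclideanSpace.proj i).hasFDerivAt).comp_hasDerivAt 0 (hdγ 0).hasDerivAt
    exact h
  have hF : (fun s => cRic (wLap ρ) x (γ s))
      = fun s => ∑ i, ∑ j, hess ρ x i j * (γ s i - x i) * (γ s j - x j) := by
    funext s
    rw [cRic_eq hρ x (γ s)]
    refine Finset.sum_congr rfl fun i _ => Finset.sum_congr rfl fun j _ => ?_
    simp
  have hd1 : ∀ s : ℝ,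
      HasDerivAt (fun t => ∑ i, ∑ j, hess ρ x i j * (γ t i - x i) * (γ t j - x j))
        (∑ i, ∑ j, hess ρ x i j *
          (deriv γ s i * (γ s j - x j) + (γ s i - x i) * deriv γ s j)) s := by
    intro s
    refine HasDerivAt.fun_sum fun i _ => HasDerivAt.fun_sum fun j _ => ?_
    have h := ((hc i s).mul (hc j s)).const_mul (hess ρ x i j)
    simpa [mul_assoc] using h
  have hder1 : deriv (fun t => ∑ i, ∑ j, hess ρ x i j * (γ t i - x i) * (γ t j - x j))
      = fun s => ∑ i, ∑ j, hess ρ x i j *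
          (deriv γ s i * (γ s j - x j) + (γ s i - x i) * deriv γ s j) :=
    funext fun s => (hd1 s).deriv
  have hd2 : HasDerivAt (fun s => ∑ i, ∑ j, hess ρ x i j *
        (deriv γ s i * (γ s j - x j) + (γ s i - x i) * deriv γ s j))
      (∑ i, ∑ j, hess ρ x i j *
        ((deriv (deriv γ) 0 i * (γ 0 j - x j) + deriv γ 0 i * deriv γ 0 j)
          + (deriv γ 0 i * deriv γ 0 j + (γ 0 i - x i) * deriv (deriv γ) 0 j))) 0 := by
    refine HasDerivAt.fun_sum fun i _ => HasDerivAt.fun_sum fun j _ => ?_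
    exact (((hc' i).mul (hc j 0)).add ((hc i 0).mul (hc' j))).const_mul (hess ρ x i j)
  rw [hF, hder1, hd2.deriv, h0]
  simp only [sub_self, mul_zero, zero_mul, add_zero, zero_add]
  rw [Finset.mul_sum]
  refine Finset.sum_congr rfl fun i _ => ?_
  rw [Finset.mul_sum]
  refine Finset.sum_congr rfl fun j _ => by ring
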